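/- Let r be a reward function that is differentiable on [0,∞), let c > 0 and p ∈ (0,1), and let σ be a normal stationary policy on [0,c] satisfying r'(σ(x)) ≥ (1−p)·r'(σ(x − σ(x))) for Lebesgue-almost every x ∈ [0,c]. Then for every Borel probability measure Q on [0,c] with mean ∫ x dQ(x) = pc, every initial battery level x ∈ [0,c], and every n ≥ 1, the expected n-horizon total reward under i.i.d. Bernoulli arrivals is no larger than under i.i.d. Q arrivals: E_{X^n ∼ B̃_p^{⊗n}}[R_n(σ, X^n, x)] ≤ E_{X^n ∼ Q^{⊗n}}[R_n(σ, X^n, x)], where B̃_p := (1−p)δ_0 + p δ_c. -/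

import Mathlib

open Set MeasureTheory

/-- Battery levels: `battery c σ x xs t` is the battery level `b_{t+1}` (just after the
arrival of `xs t`) when the initial level is `b_{1⁻} = x`, the arrivals are
`xs 0, xs 1, …`, and the stationary policy `σ` is used: `b_t = min (b_{t⁻} + x_t) c`,
`b_{(t+1)⁻} = b_t - σ (b_t)`. -/
noncomputable def battery (c : ℝ) (σ : ℝ → ℝ) (x : ℝ) (xs : ℕ → ℝ) : ℕ → ℝ
  | 0 => min (x + xs 0) c
  | t + 1 => min (battery c σ x xs t - σ (battery c σ x xs t) + xs (t + 1)) c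

/-- The `n`-horizon total reward `R_n(σ, (x_1, …, x_n), x) = ∑_{t=1}^n r (σ (b_t))`. -/
noncomputable def totalReward (r : ℝ → ℝ) (c : ℝ) (σ : ℝ → ℝ) (x : ℝ) (xs : ℕ → ℝ)
    (n : ℕ) : ℝ :=
  ∑ t ∈ Finset.range n, r (σ (battery c σ x xs t))

/-- The Bernoulli energy-arrival distribution `B̃_p = (1-p) δ_0 + p δ_c`. -/
noncomputable def bern (c p : ℝ) : Measure ℝ :=
  ENNReal.ofReal (1 - p) • Measure.dirac 0 + ENNReal.ofReal p • Measure.dirac c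

open scoped ENNReal NNReal

namespace BLF

structure Setting where
  r : ℝ → ℝ
  r' : ℝ → ℝ
  c : ℝ
  p : ℝ
  sig : ℝ → ℝ
  hr_zero : r 0 = 0
  hr_mono : MonotoneOn r (Ici 0)
  hr_lip : ∃ K : NNReal, LipschitzOnWith K r (Ici 0)
  hr_concave : ConcaveOn ℝ (Ici 0) r
  hr_deriv : ∀ x : ℝ, 0 ≤ x → HasDerivWithinAt r (r' x) (Ici 0) x
  hc : 0 < c
  hp0 : 0 < p
  hp1 : p < 1
  hs_nonneg : ∀ x ∈ Icc (0:ℝ) c, 0 ≤ sig x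
  hs_le : ∀ x ∈ Icc (0:ℝ) c, sig x ≤ x
  hs_mono : MonotoneOn sig (Icc (0:ℝ) c)
  hs_concave : ConcaveOn ℝ (Icc (0:ℝ) c) sig
  hng : ∀ᵐ x ∂(volume.restrict (Icc (0:ℝ) c)), (1 - p) * r' (sig (x - sig x)) ≤ r' (sig x)

/-- FTC-type inequality: a monotone Lipschitz function whose (a.e.) derivative is bounded by `g`
on `(u,v]` satisfies `W v - W u ≤ ∫ g`. -/
lemma mono_lipschitz_integral_bound {W g : ℝ → ℝ} {L : NNReal}
    (hW : Monotone W) (hL : LipschitzWith L W) {u v : ℝ} (huv : u ≤ v)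
    (hg_int : IntervalIntegrable g volume u v)
    (hg_nonneg : ∀ᵐ a ∂volume, a ∈ Ioc u v → 0 ≤ g a)
    (hbound : ∀ᵐ a ∂volume, a ∈ Ioc u v → ∀ d : ℝ, HasDerivAt W d a → d ≤ g a) :
    W v - W u ≤ ∫ t in u..v, g t := by
  set μ := hW.stieltjesFunction.measure with hμdef
  have hst : ∀ x, hW.stieltjesFunction x = W x := by
    intro x
    rw [Monotone.stieltjesFunction_eq]
    exact tendsto_nhds_unique (hW.tendsto_rightLim x)
      ((hL.continuous.tendsto x).mono_left nhdsWithin_le_nhds)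
  have hIoc : ∀ a b : ℝ, μ (Ioc a b) = ENNReal.ofReal (W b - W a) := by
    intro a b
    rw [hμdef, StieltjesFunction.measure_Ioc, hst, hst]
  -- the complementary monotone function L * t - W t
  have hW2 : Monotone (fun t : ℝ => (L : ℝ) * t - W t) := by
    intro a b hab
    have := hL.dist_le_mul a b
    rw [Real.dist_eq, Real.dist_eq, abs_of_nonpos (by linarith [hW hab] : W a - W b ≤ 0),
      abs_of_nonpos (by linarith : a - b ≤ 0)] at this
    simp only
    nlinarith
  have hext : μ + hW2.stieltjesFunction.measure = (L : ℝ≥0∞) • volume := by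
    refine Measure.ext_of_Ioc' _ _ (fun a b hab => ?_) (fun a b hab => ?_)
    · rw [Measure.add_apply, hIoc, StieltjesFunction.measure_Ioc]
      exact ENNReal.add_ne_top.2 ⟨ENNReal.ofReal_ne_top, ENNReal.ofReal_ne_top⟩
    have h2 : ∀ x, hW2.stieltjesFunction x = (L : ℝ) * x - W x := by
      intro x
      rw [Monotone.stieltjesFunction_eq]
      refine tendsto_nhds_unique (hW2.tendsto_rightLim x) ?_
      have : Continuous (fun t : ℝ => (L : ℝ) * t - W t) :=
        (continuous_const.mul continuous_id).sub hL.continuous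
      exact (this.tendsto x).mono_left nhdsWithin_le_nhds
    rw [Measure.add_apply, hIoc, StieltjesFunction.measure_Ioc, h2, h2,
      Measure.smul_apply, Real.volume_Ioc, smul_eq_mul]
    have h3 : (L:ℝ) * a - W a ≤ (L:ℝ) * b - W b := hW2 hab.le
    rw [← ENNReal.ofReal_add (by linarith [hW hab.le]) (by linarith)]
    rw [← ENNReal.ofReal_coe_nnreal, ← ENNReal.ofReal_mul (by positivity)]
    congr 1
    ring
  have hle : ∀ s : Set ℝ, μ s ≤ (L : ℝ≥0∞) * volume s := by
    intro s
    have : (μ + hW2.stieltjesFunction.measure) s = (L : ℝ≥0∞) * volume s := by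
      rw [hext]; simp [Measure.smul_apply, smul_eq_mul]
    calc μ s ≤ (μ + hW2.stieltjesFunction.measure) s := by
                simp [Measure.add_apply, le_add_right (le_refl (μ s))]
      _ = _ := this
  have hac : μ ≪ volume := by
    intro s hs
    have := hle s
    rw [hs, mul_zero] at this
    exact le_antisymm this zero_le
  -- rewrite via rnDeriv
  have hWD : volume.withDensity (μ.rnDeriv volume) = μ :=
    Measure.withDensity_rnDeriv_eq μ volume hac
  have key : μ (Ioc u v) = ∫⁻ a in Ioc u v, μ.rnDeriv volume a ∂volume := by
    conv_lhs => rw [← hWD]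
    rw [withDensity_apply _ measurableSet_Ioc]
  -- bound the rnDeriv a.e. on Ioc u v
  have hae : ∀ᵐ a ∂volume, a ∈ Ioc u v → μ.rnDeriv volume a ≤ ENNReal.ofReal (g a) := by
    filter_upwards [hW.ae_hasDerivAt, hbound, hg_nonneg, Measure.rnDeriv_lt_top μ volume]
      with a hda hba hga hfin ha
    rw [ENNReal.le_ofReal_iff_toReal_le hfin.ne (hga ha)]
    exact hba ha _ hda
  have hlint : (∫⁻ a in Ioc u v, μ.rnDeriv volume a ∂volume)
      ≤ ∫⁻ a in Ioc u v, ENNReal.ofReal (g a) ∂volume := by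
    refine lintegral_mono_ae ?_
    rw [ae_restrict_iff' measurableSet_Ioc]
    exact hae
  have hInt : IntegrableOn g (Ioc u v) volume := by
    rw [intervalIntegrable_iff] at hg_int
    rwa [uIoc_of_le huv] at hg_int
  have hofReal : ∫⁻ a in Ioc u v, ENNReal.ofReal (g a) ∂volume
      = ENNReal.ofReal (∫ a in Ioc u v, g a ∂volume) := by
    rw [MeasureTheory.ofReal_integral_eq_lintegral_ofReal hInt]
    exact (ae_restrict_iff' measurableSet_Ioc).2
      (by filter_upwards [hg_nonneg] with a h ha using h ha)
  have hfinal : W v - W u = (μ (Ioc u v)).toReal := by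
    rw [hIoc, ENNReal.toReal_ofReal (by linarith [hW huv])]
  rw [hfinal, intervalIntegral.integral_of_le huv]
  calc (μ (Ioc u v)).toReal ≤ (ENNReal.ofReal (∫ a in Ioc u v, g a ∂volume)).toReal := by
        apply ENNReal.toReal_mono ENNReal.ofReal_ne_top
        rw [key, ← hofReal]
        exact hlint
    _ = ∫ a in Ioc u v, g a ∂volume := by
        rw [ENNReal.toReal_ofReal]
        exact integral_nonneg_of_ae ((ae_restrict_iff' measurableSet_Ioc).2
          (by filter_upwards [hg_nonneg] with a h ha using h ha))



/-- If the right slopes of `W` at `a` are bounded by `C`, any derivative of `W` at `a` is `≤ C`. -/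
lemma deriv_le_of_right_slope {W : ℝ → ℝ} {a C : ℝ}
    (h : ∀ b, a < b → W b - W a ≤ C * (b - a)) {d : ℝ} (hd : HasDerivAt W d a) : d ≤ C := by
  have h1 : Filter.Tendsto (slope W a) (nhdsWithin a (Ioi a)) (nhds d) :=
    ((hasDerivAt_iff_tendsto_slope).1 hd).mono_left
      (nhdsWithin_mono _ (fun x hx => (Set.mem_compl_singleton_iff).2 (ne_of_gt hx)))
  refine le_of_tendsto h1 ?_
  filter_upwards [self_mem_nhdsWithin] with b hb
  have hab : a < b := hb
  rw [slope_def_field, div_le_iff₀ (by linarith)]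
  have := h b hab; linarith

lemma integral_antitone_le {g : ℝ → ℝ} (hg : Antitone g) {x y : ℝ} (hxy : x ≤ y) :
    ∫ t in x..y, g t ≤ g x * (y - x) := by
  have h1 : ∫ t in x..y, g t ≤ ∫ t in x..y, g x := by
    apply intervalIntegral.integral_mono_on hxy hg.intervalIntegrable intervalIntegrable_const
    intro t ht; exact hg ht.1
  rw [intervalIntegral.integral_const, smul_eq_mul] at h1
  linarith

/-- product form of the concave three-point slope inequality -/
lemma concave_cross {f : ℝ → ℝ} {s : Set ℝ} (hf : ConcaveOn ℝ s f) {x y z : ℝ}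
    (hx : x ∈ s) (hz : z ∈ s) (h1 : x ≤ y) (h2 : y ≤ z) :
    (f z - f y) * (y - x) ≤ (f y - f x) * (z - y) := by
  rcases eq_or_lt_of_le h1 with rfl | h1
  · simp
  rcases eq_or_lt_of_le h2 with rfl | h2
  · simp
  have := (concaveOn_iff_slope_anti_adjacent.1 hf).2 hx hz h1 h2
  rw [div_le_div_iff₀ (by linarith) (by linarith)] at this
  linarith


/-- The core algebraic inequality for the concavity induction step. -/
lemma Tlemma {q s1 s2 t1 t2 R1 R2 W1 W2 : ℝ}
    (hs1 : 0 ≤ s1) (hs2 : 0 ≤ s2) (ht1 : 0 ≤ t1) (ht2 : 0 ≤ t2)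
    (hW1 : 0 ≤ W1) (hW2 : 0 ≤ W2) (hq : 0 ≤ q)
    (f1 : q * s1 ≤ R1) (f2 : R2 ≤ q * s2) (f3 : W2 ≤ q * t2)
    (f4 : s2 * t1 ≤ s1 * t2) (f5 : W2 * t1 ≤ W1 * t2) :
    (R2 + W2) * (s1 + t1) ≤ (R1 + W1) * (s2 + t2) := by
  have e1 : R2 * s1 ≤ R1 * s2 := by
    nlinarith [mul_le_mul_of_nonneg_right f2 hs1, mul_le_mul_of_nonneg_right f1 hs2]
  have hX : 0 ≤ q * s1 * t2 + W1 * s2 - q * s2 * t1 - W2 * s1 := by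
    rcases eq_or_lt_of_le ht2 with h | h
    · have hW2' : W2 = 0 := le_antisymm (by rw [← h] at f3; simpa using f3) hW2
      have h4 : s2 * t1 = 0 := by
        refine le_antisymm ?_ (mul_nonneg hs2 ht1)
        rw [← h] at f4; simpa using f4
      have h5 : q * s2 * t1 = 0 := by rw [mul_assoc, h4, mul_zero]
      have h6 : W2 * s1 = 0 := by rw [hW2', zero_mul]
      have h7 : 0 ≤ q * s1 * t2 := by positivity
      have h8 : 0 ≤ W1 * s2 := mul_nonneg hW1 hs2
      linarith
    · have h1 : 0 ≤ (q * t2 - W2) * (s1 * t2 - s2 * t1) :=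
        mul_nonneg (by linarith) (by linarith)
      have h2 : 0 ≤ s2 * (W1 * t2 - W2 * t1) := mul_nonneg hs2 (by linarith)
      nlinarith [h1, h2]
  have e3 : R2 * t1 + W2 * s1 ≤ R1 * t2 + W1 * s2 := by
    have g1 : R2 * t1 ≤ q * s2 * t1 := by
      have := mul_le_mul_of_nonneg_right f2 ht1
      nlinarith [this]
    have g2 : q * s1 * t2 ≤ R1 * t2 := by
      have := mul_le_mul_of_nonneg_right f1 ht2
      nlinarith [this]
    linarith
  nlinarith [e1, f5, e3]

namespace Setting
variable (S : Setting)

noncomputable def cl (t : ℝ) : ℝ := max 0 (min t S.c)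
noncomputable def sigc (t : ℝ) : ℝ := S.sig (S.cl t)
noncomputable def tauc (t : ℝ) : ℝ := S.cl t - S.sigc t
noncomputable def rho (t : ℝ) : ℝ := S.r' (S.sigc t)

lemma cl_mem (t : ℝ) : S.cl t ∈ Icc 0 S.c :=
  ⟨le_max_left _ _, max_le S.hc.le (min_le_right _ _)⟩

lemma cl_mono : Monotone S.cl :=
  fun _ _ h => max_le_max le_rfl (min_le_min h le_rfl)

lemma cl_eq {t : ℝ} (ht : t ∈ Icc 0 S.c) : S.cl t = t := by
  simp only [cl, min_eq_left ht.2, max_eq_right ht.1]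

lemma cl_lip {a b : ℝ} (h : a ≤ b) : S.cl b - S.cl a ≤ b - a := by
  have h1 : min b S.c - min a S.c ≤ b - a := by
    rcases le_total b S.c with hb | hb <;> rcases le_total a S.c with ha | ha <;>
      simp only [min_eq_left, min_eq_right, *] <;> linarith
  have h2 : min a S.c ≤ min b S.c := min_le_min h le_rfl
  simp only [cl]
  rcases le_total (min a S.c) 0 with ha0 | ha0 <;> rcases le_total (min b S.c) 0 with hb0 | hb0 <;>
    simp only [max_eq_left, max_eq_right, *] <;> linarith


lemma sig_zero : S.sig 0 = 0 :=
  le_antisymm (S.hs_le 0 ⟨le_rfl, S.hc.le⟩) (S.hs_nonneg 0 ⟨le_rfl, S.hc.le⟩)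

lemma sig_lip {x y : ℝ} (hx : x ∈ Icc (0:ℝ) S.c) (hy : y ∈ Icc (0:ℝ) S.c) (hxy : x ≤ y) :
    S.sig y - S.sig x ≤ y - x := by
  rcases eq_or_lt_of_le hy.1 with h0 | h0
  · have hx0 : x = 0 := le_antisymm (hxy.trans h0.symm.le) hx.1
    have hy0 : y = 0 := h0.symm ▸ rfl
    rw [hx0, hy0]; simp
  · have key := S.hs_concave.2 (⟨le_rfl, S.hc.le⟩ : (0:ℝ) ∈ Icc (0:ℝ) S.c) hy
      (show (0:ℝ) ≤ (y - x)/y from div_nonneg (by linarith) h0.le)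
      (show (0:ℝ) ≤ x/y from div_nonneg hx.1 h0.le)
      (by field_simp; ring)
    simp only [smul_eq_mul, mul_zero, zero_add, S.sig_zero] at key
    have hxx : x/y * y = x := by field_simp
    rw [hxx] at key
    -- key : x / y * S.sig y ≤ S.sig x
    have key' : x * S.sig y ≤ S.sig x * y := by
      rw [div_mul_eq_mul_div, div_le_iff₀ h0] at key; exact key
    have h1 : S.sig y ≤ y := S.hs_le y hy
    have h2 : 0 ≤ S.sig y := S.hs_nonneg y hy
    nlinarith [mul_le_mul_of_nonneg_left h1 (sub_nonneg.2 hxy)]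

lemma r'_le_slope {x y : ℝ} (hx : 0 ≤ x) (hxy : x < y) :
    S.r' y ≤ (S.r y - S.r x) / (y - x) := by
  have hy : (0:ℝ) ≤ y := hx.trans hxy.le
  have h := S.hr_concave.neg.slope_le_of_hasDerivWithinAt (mem_Ici.2 hx) (mem_Ici.2 hy) hxy
    (S.hr_deriv y hy).neg
  rw [slope_def_field] at h
  have heq : ((-S.r) y - (-S.r) x) / (y - x) = -((S.r y - S.r x) / (y - x)) := by
    simp only [Pi.neg_apply]; ring
  rw [heq] at h
  linarith

lemma slope_le_r' {x y : ℝ} (hx : 0 ≤ x) (hxy : x < y) :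
    (S.r y - S.r x) / (y - x) ≤ S.r' x := by
  have hy : (0:ℝ) ≤ y := hx.trans hxy.le
  have h := S.hr_concave.neg.le_slope_of_hasDerivWithinAt (mem_Ici.2 hx) (mem_Ici.2 hy) hxy
    (S.hr_deriv x hx).neg
  rw [slope_def_field] at h
  have heq : ((-S.r) y - (-S.r) x) / (y - x) = -((S.r y - S.r x) / (y - x)) := by
    simp only [Pi.neg_apply]; ring
  rw [heq] at h
  linarith

lemma r'_antitone {x y : ℝ} (hx : 0 ≤ x) (hxy : x ≤ y) : S.r' y ≤ S.r' x := by
  rcases eq_or_lt_of_le hxy with rfl | h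
  · exact le_rfl
  · exact (S.r'_le_slope hx h).trans (S.slope_le_r' hx h)

lemma r'_nonneg {x : ℝ} (hx : 0 ≤ x) : 0 ≤ S.r' x := by
  have h := S.r'_le_slope (x := x) (y := x + 1) hx (by linarith)
  have hmono : S.r x ≤ S.r (x + 1) := S.hr_mono (mem_Ici.2 hx) (mem_Ici.2 (by linarith)) (by linarith)
  have : (0:ℝ) ≤ (S.r (x+1) - S.r x) / (x + 1 - x) := by
    apply div_nonneg (by linarith); linarith
  -- wrong direction: r' (x+1) ≤ slope; need r' x ≥ slope ≥ 0
  have h2 := S.slope_le_r' (x := x) (y := x + 1) hx (by linarith)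
  linarith

/-- tangent line bound, left endpoint: `r y - r x ≤ r' x * (y - x)` for `0 ≤ x ≤ y`. -/
lemma r_sub_le {x y : ℝ} (hx : 0 ≤ x) (hxy : x ≤ y) :
    S.r y - S.r x ≤ S.r' x * (y - x) := by
  rcases eq_or_lt_of_le hxy with rfl | h
  · simp
  · have := S.slope_le_r' hx h
    rw [div_le_iff₀ (by linarith)] at this
    linarith

/-- tangent line bound, right endpoint: `r' y * (y - x) ≤ r y - r x` for `0 ≤ x ≤ y`. -/
lemma le_r_sub {x y : ℝ} (hx : 0 ≤ x) (hxy : x ≤ y) :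
    S.r' y * (y - x) ≤ S.r y - S.r x := by
  rcases eq_or_lt_of_le hxy with rfl | h
  · simp
  · have := S.r'_le_slope hx h
    rw [le_div_iff₀ (by linarith)] at this
    linarith

lemma sigc_mem (t : ℝ) : S.sigc t ∈ Icc (0:ℝ) S.c :=
  ⟨S.hs_nonneg _ (S.cl_mem t), (S.hs_le _ (S.cl_mem t)).trans (S.cl_mem t).2⟩

lemma sigc_mono : Monotone S.sigc :=
  fun _ _ h => S.hs_mono (S.cl_mem _) (S.cl_mem _) (S.cl_mono h)

lemma tauc_mem (t : ℝ) : S.tauc t ∈ Icc (0:ℝ) S.c :=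
  ⟨sub_nonneg.2 (S.hs_le _ (S.cl_mem t)),
    (sub_le_self _ (S.hs_nonneg _ (S.cl_mem t))).trans (S.cl_mem t).2⟩

lemma tauc_mono : Monotone S.tauc := by
  intro a b h
  have := S.sig_lip (S.cl_mem a) (S.cl_mem b) (S.cl_mono h)
  simp only [tauc, sigc]
  linarith

lemma tauc_lip {a b : ℝ} (h : a ≤ b) : S.tauc b - S.tauc a ≤ b - a := by
  have h1 := S.cl_lip h
  have h2 : S.sigc a ≤ S.sigc b := S.sigc_mono h
  simp only [tauc]
  linarith

lemma sigc_lip {a b : ℝ} (h : a ≤ b) : S.sigc b - S.sigc a ≤ b - a := by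
  have := S.sig_lip (S.cl_mem a) (S.cl_mem b) (S.cl_mono h)
  have h1 := S.cl_lip h
  simp only [sigc]
  linarith

lemma rho_anti : Antitone S.rho :=
  fun _ _ h => S.r'_antitone (S.sigc_mem _).1 (S.sigc_mono h)

lemma rho_nonneg (t : ℝ) : 0 ≤ S.rho t := S.r'_nonneg (S.sigc_mem _).1

lemma sigc_eq {t : ℝ} (ht : t ∈ Icc (0:ℝ) S.c) : S.sigc t = S.sig t := by
  simp only [sigc, S.cl_eq ht]

lemma tauc_eq {t : ℝ} (ht : t ∈ Icc (0:ℝ) S.c) : S.tauc t = t - S.sig t := by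
  simp only [tauc, sigc, S.cl_eq ht]

lemma r_contOn : ContinuousOn S.r (Ici 0) := by
  obtain ⟨K, hK⟩ := S.hr_lip
  exact hK.continuousOn

lemma r_nonneg {x : ℝ} (hx : 0 ≤ x) : 0 ≤ S.r x := by
  have := S.hr_mono (self_mem_Ici) (mem_Ici.2 hx) hx
  rw [S.hr_zero] at this; exact this


noncomputable def K : ℝ≥0 := S.hr_lip.choose

lemma hK : LipschitzOnWith S.K S.r (Ici 0) := S.hr_lip.choose_spec

def good (a : ℝ) : Prop := (1 - S.p) * S.r' (S.sig (a - S.sig a)) ≤ S.r' (S.sig a)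

lemma good_ae : ∀ᵐ a ∂(volume : Measure ℝ), a ∈ Icc 0 S.c → S.good a :=
  (ae_restrict_iff' measurableSet_Icc).1 S.hng

lemma exists_good {s : Set ℝ} (h0 : 0 < volume s) (hsub : s ⊆ Icc 0 S.c) :
    ∃ a ∈ s, S.good a := by
  by_contra hcon
  push_neg at hcon
  have hsub2 : s ⊆ {a | ¬(a ∈ Icc 0 S.c → S.good a)} := by
    intro a ha
    simp only [mem_setOf_eq, Classical.not_imp]
    exact ⟨hsub ha, hcon a ha⟩
  have h2 : volume {a : ℝ | ¬(a ∈ Icc 0 S.c → S.good a)} = 0 := S.good_ae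
  exact absurd (le_antisymm ((measure_mono hsub2).trans h2.le) zero_le) h0.ne'

lemma good_rho {a : ℝ} (ha : a ∈ Icc 0 S.c) (hg : S.good a) :
    (1 - S.p) * S.rho (S.tauc a) ≤ S.rho a := by
  have h1 : S.tauc a = a - S.sig a := S.tauc_eq ha
  have h2 : S.sigc (S.tauc a) = S.sig (S.tauc a) := S.sigc_eq (S.tauc_mem a)
  have h3 : S.rho (S.tauc a) = S.r' (S.sig (a - S.sig a)) := by
    rw [rho, h2, h1]
  have h4 : S.rho a = S.r' (S.sig a) := by rw [rho, S.sigc_eq ha]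
  rw [h3, h4]
  exact hg

lemma cl_idem (b : ℝ) : S.cl (S.cl b) = S.cl b := S.cl_eq (S.cl_mem b)

lemma sigc_cl (b : ℝ) : S.sigc (S.cl b) = S.sigc b := by simp only [sigc, S.cl_idem]

lemma tauc_cl (b : ℝ) : S.tauc (S.cl b) = S.tauc b := by
  simp only [tauc, S.cl_idem, S.sigc_cl]

lemma cl_le_self {b : ℝ} (hb : 0 ≤ b) : S.cl b ≤ b :=
  max_le hb (min_le_left _ _)

lemma sigc_add_tauc (b : ℝ) : S.sigc b + S.tauc b = S.cl b := by simp [tauc]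

noncomputable def V : ℕ → ℝ → ℝ
  | 0 => fun _ => 0
  | (m+1) => fun b => S.r (S.sigc b) + (S.p * V m S.c + (1 - S.p) * V m (S.tauc b))

lemma V_succ (m : ℕ) (b : ℝ) :
    S.V (m+1) b = S.r (S.sigc b) + (S.p * S.V m S.c + (1 - S.p) * S.V m (S.tauc b)) := by
  rw [V]

lemma V_succ_sub (m : ℕ) (x y : ℝ) : S.V (m+1) y - S.V (m+1) x =
    (S.r (S.sigc y) - S.r (S.sigc x)) + (1 - S.p) * (S.V m (S.tauc y) - S.V m (S.tauc x)) := by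
  simp only [V_succ]; ring

lemma V_cl (m : ℕ) (b : ℝ) : S.V m (S.cl b) = S.V m b := by
  cases m with
  | zero => rfl
  | succ m => simp only [V_succ, S.sigc_cl, S.tauc_cl]

lemma hp1' : 0 < 1 - S.p := by linarith [S.hp1]

lemma V_main (m : ℕ) :
    Monotone (S.V m) ∧ LipschitzWith ((m : ℝ≥0) * S.K) (S.V m) ∧
    (∀ u v : ℝ, 0 ≤ u → u ≤ v → v ≤ S.c → S.V m v - S.V m u ≤ ∫ t in u..v, S.rho t) ∧
    ConcaveOn ℝ (Icc 0 S.c) (S.V m) := by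
  induction m with
  | zero =>
    refine ⟨monotone_const, ?_, fun u v h0 huv hvc => ?_, concaveOn_const _ (convex_Icc _ _)⟩
    · simpa [V] using LipschitzWith.const (α := ℝ) (0 : ℝ)
    · simp only [V, sub_self]
      exact intervalIntegral.integral_nonneg huv (fun t _ => S.rho_nonneg t)
  | succ m ih =>
    obtain ⟨hM, hL, hP, hC⟩ := ih
    -- monotonicity
    have hM' : Monotone (S.V (m+1)) := by
      intro x y hxy
      simp only [V_succ]
      have h1 : S.r (S.sigc x) ≤ S.r (S.sigc y) :=
        S.hr_mono (mem_Ici.2 (S.sigc_mem x).1) (mem_Ici.2 (S.sigc_mem y).1) (S.sigc_mono hxy)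
      have h2 : S.V m (S.tauc x) ≤ S.V m (S.tauc y) := hM (S.tauc_mono hxy)
      nlinarith [S.hp1']
    -- one-sided Lipschitz bound
    have hLip1 : ∀ x y : ℝ, x ≤ y →
        S.V (m+1) y - S.V (m+1) x ≤ ((m+1 : ℝ) * (S.K : ℝ)) * (y - x) := by
      intro x y hxy
      rw [V_succ_sub]
      have hσ1 : S.sigc x ≤ S.sigc y := S.sigc_mono hxy
      have hτ1 : S.tauc x ≤ S.tauc y := S.tauc_mono hxy
      have hr1 : S.r (S.sigc y) - S.r (S.sigc x) ≤ (S.K : ℝ) * (S.sigc y - S.sigc x) := by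
        have h := S.hK.dist_le_mul _ (mem_Ici.2 (S.sigc_mem y).1) _ (mem_Ici.2 (S.sigc_mem x).1)
        rw [Real.dist_eq, Real.dist_eq, abs_of_nonneg (sub_nonneg.2 hσ1)] at h
        exact (le_abs_self _).trans h
      have hV1 : S.V m (S.tauc y) - S.V m (S.tauc x) ≤ ((m : ℝ) * (S.K : ℝ)) * (S.tauc y - S.tauc x) := by
        have h := hL.dist_le_mul (S.tauc y) (S.tauc x)
        rw [Real.dist_eq, Real.dist_eq, abs_of_nonneg (sub_nonneg.2 hτ1)] at h
        have h2 := (le_abs_self (S.V m (S.tauc y) - S.V m (S.tauc x))).trans h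
        push_cast at h2
        exact h2
      have hσ2 : S.sigc y - S.sigc x ≤ y - x := S.sigc_lip hxy
      have hτ2 : S.tauc y - S.tauc x ≤ y - x := S.tauc_lip hxy
      have hKnn : (0:ℝ) ≤ (S.K : ℝ) := S.K.coe_nonneg
      have hVnn : 0 ≤ S.V m (S.tauc y) - S.V m (S.tauc x) := sub_nonneg.2 (hM hτ1)
      have e1 : (S.K : ℝ) * (S.sigc y - S.sigc x) ≤ (S.K : ℝ) * (y - x) :=
        mul_le_mul_of_nonneg_left hσ2 hKnn
      have e2 : (1 - S.p) * (S.V m (S.tauc y) - S.V m (S.tauc x))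
          ≤ S.V m (S.tauc y) - S.V m (S.tauc x) := by
        nlinarith [mul_nonneg S.hp0.le hVnn]
      have e4 : ((m : ℝ) * (S.K : ℝ)) * (S.tauc y - S.tauc x) ≤ ((m : ℝ) * (S.K : ℝ)) * (y - x) :=
        mul_le_mul_of_nonneg_left hτ2 (by positivity)
      nlinarith
    have hL' : LipschitzWith (((m+1 : ℕ) : ℝ≥0) * S.K) (S.V (m+1)) := by
      refine LipschitzWith.of_dist_le_mul (fun x y => ?_)
      rcases le_total x y with h | h
      · rw [Real.dist_eq, Real.dist_eq, abs_of_nonpos (by linarith [hM' h] : S.V (m+1) x - S.V (m+1) y ≤ 0),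
          abs_of_nonpos (by linarith : x - y ≤ 0)]
        have := hLip1 x y h
        push_cast
        linarith
      · rw [Real.dist_eq, Real.dist_eq, abs_of_nonneg (by linarith [hM' h] : 0 ≤ S.V (m+1) x - S.V (m+1) y),
          abs_of_nonneg (by linarith : 0 ≤ x - y)]
        have := hLip1 y x h
        push_cast
        linarith
    -- pointwise right-slope bound at good points
    have hpt : ∀ a, a ∈ Icc 0 S.c → S.good a → ∀ b, a < b →
        S.V (m+1) b - S.V (m+1) a ≤ S.rho a * (b - a) := by
      intro a ha hg b hab
      rw [← S.V_cl (m+1) b]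
      set b' := S.cl b with hb'
      have hab' : a ≤ b' := by
        have := S.cl_mono hab.le
        rwa [S.cl_eq ha] at this
      have hbb : b' ≤ b := S.cl_le_self (by linarith [ha.1])
      have hσ1 : S.sigc a ≤ S.sigc b' := S.sigc_mono hab'
      have hτ1 : S.tauc a ≤ S.tauc b' := S.tauc_mono hab'
      rw [V_succ_sub]
      have hr1 : S.r (S.sigc b') - S.r (S.sigc a) ≤ S.rho a * (S.sigc b' - S.sigc a) :=
        S.r_sub_le (S.sigc_mem a).1 hσ1
      have hV1 : S.V m (S.tauc b') - S.V m (S.tauc a) ≤ S.rho (S.tauc a) * (S.tauc b' - S.tauc a) := by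
        refine (hP (S.tauc a) (S.tauc b') (S.tauc_mem a).1 hτ1 (S.tauc_mem b').2).trans ?_
        exact integral_antitone_le S.rho_anti hτ1
      have hV2 : (1 - S.p) * (S.V m (S.tauc b') - S.V m (S.tauc a)) ≤ S.rho a * (S.tauc b' - S.tauc a) := by
        have hgr := S.good_rho ha hg
        have h1 : (1 - S.p) * (S.V m (S.tauc b') - S.V m (S.tauc a))
            ≤ (1 - S.p) * (S.rho (S.tauc a) * (S.tauc b' - S.tauc a)) :=
          mul_le_mul_of_nonneg_left hV1 (S.hp1').le
        have h2 : (1 - S.p) * S.rho (S.tauc a) * (S.tauc b' - S.tauc a)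
            ≤ S.rho a * (S.tauc b' - S.tauc a) :=
          mul_le_mul_of_nonneg_right hgr (by linarith)
        nlinarith
      have hsum : S.sigc b' - S.sigc a + (S.tauc b' - S.tauc a) = b' - a := by
        have h1 := S.sigc_add_tauc b'
        have h2 := S.sigc_add_tauc a
        rw [S.cl_idem] at h1
        rw [S.cl_eq ha] at h2
        linarith
      have hrhoa : 0 ≤ S.rho a := S.rho_nonneg a
      nlinarith [mul_le_mul_of_nonneg_left hbb hrhoa]
    -- the integral bound
    have hP' : ∀ u v : ℝ, 0 ≤ u → u ≤ v → v ≤ S.c →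
        S.V (m+1) v - S.V (m+1) u ≤ ∫ t in u..v, S.rho t := by
      intro u v h0 huv hvc
      refine mono_lipschitz_integral_bound hM' hL' huv S.rho_anti.intervalIntegrable
        (Filter.Eventually.of_forall (fun a _ => S.rho_nonneg a)) ?_
      filter_upwards [S.good_ae] with a hga ha d hd
      have haIcc : a ∈ Icc 0 S.c := ⟨h0.trans ha.1.le, ha.2.trans hvc⟩
      exact deriv_le_of_right_slope (fun b hb => hpt a haIcc (hga haIcc) b hb) hd
    -- concavity
    have hC' : ConcaveOn ℝ (Icc 0 S.c) (S.V (m+1)) := by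
      have hVc : Continuous (S.V (m+1)) := hL'.continuous
      -- Step A: triple inequality when the middle point is good
      have key : ∀ a b d : ℝ, a ∈ Icc 0 S.c → b ∈ Icc 0 S.c → d ∈ Icc 0 S.c →
          a ≤ b → b ≤ d → S.good b →
          (S.V (m+1) d - S.V (m+1) b) * (b - a) ≤ (S.V (m+1) b - S.V (m+1) a) * (d - b) := by
        intro a b d ha hb hd hab hbd hg
        have hσ1 : S.sigc a ≤ S.sigc b := S.sigc_mono hab
        have hσ2 : S.sigc b ≤ S.sigc d := S.sigc_mono hbd
        have hτ1 : S.tauc a ≤ S.tauc b := S.tauc_mono hab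
        have hτ2 : S.tauc b ≤ S.tauc d := S.tauc_mono hbd
        have hsum1 : S.sigc b - S.sigc a + (S.tauc b - S.tauc a) = b - a := by
          have h1 := S.sigc_add_tauc b; have h2 := S.sigc_add_tauc a
          rw [S.cl_eq hb] at h1; rw [S.cl_eq ha] at h2; linarith
        have hsum2 : S.sigc d - S.sigc b + (S.tauc d - S.tauc b) = d - b := by
          have h1 := S.sigc_add_tauc d; have h2 := S.sigc_add_tauc b
          rw [S.cl_eq hd] at h1; rw [S.cl_eq hb] at h2; linarith
        have hρ : 0 ≤ S.rho b := S.rho_nonneg b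
        have hA1 : S.rho b * (S.sigc b - S.sigc a) ≤ S.r (S.sigc b) - S.r (S.sigc a) :=
          S.le_r_sub (S.sigc_mem a).1 hσ1
        have hA2 : S.r (S.sigc d) - S.r (S.sigc b) ≤ S.rho b * (S.sigc d - S.sigc b) :=
          S.r_sub_le (S.sigc_mem b).1 hσ2
        have hW2b : (1 - S.p) * (S.V m (S.tauc d) - S.V m (S.tauc b))
            ≤ S.rho b * (S.tauc d - S.tauc b) := by
          have hint : S.V m (S.tauc d) - S.V m (S.tauc b)
              ≤ S.rho (S.tauc b) * (S.tauc d - S.tauc b) :=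
            (hP (S.tauc b) (S.tauc d) (S.tauc_mem b).1 hτ2 (S.tauc_mem d).2).trans
              (integral_antitone_le S.rho_anti hτ2)
          have h1 : (1 - S.p) * (S.V m (S.tauc d) - S.V m (S.tauc b))
              ≤ (1 - S.p) * (S.rho (S.tauc b) * (S.tauc d - S.tauc b)) :=
            mul_le_mul_of_nonneg_left hint (S.hp1').le
          have h2 : (1 - S.p) * S.rho (S.tauc b) * (S.tauc d - S.tauc b)
              ≤ S.rho b * (S.tauc d - S.tauc b) :=
            mul_le_mul_of_nonneg_right (S.good_rho hb hg) (by linarith)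
          nlinarith
        have F4' : (S.sigc d - S.sigc b) * (S.tauc b - S.tauc a)
            ≤ (S.sigc b - S.sigc a) * (S.tauc d - S.tauc b) := by
          have h := concave_cross S.hs_concave ha hd hab hbd
          rw [← S.sigc_eq ha, ← S.sigc_eq hb, ← S.sigc_eq hd] at h
          nlinarith [h, hsum1, hsum2]
        have F2' := concave_cross hC (S.tauc_mem a) (S.tauc_mem d) hτ1 hτ2
        have f5 : ((1 - S.p) * (S.V m (S.tauc d) - S.V m (S.tauc b))) * (S.tauc b - S.tauc a)
            ≤ ((1 - S.p) * (S.V m (S.tauc b) - S.V m (S.tauc a))) * (S.tauc d - S.tauc b) := by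
          nlinarith [mul_le_mul_of_nonneg_left F2' (S.hp1').le]
        have main := Tlemma (sub_nonneg.2 hσ1) (sub_nonneg.2 hσ2) (sub_nonneg.2 hτ1)
          (sub_nonneg.2 hτ2)
          (mul_nonneg (S.hp1').le (sub_nonneg.2 (hM hτ1)))
          (mul_nonneg (S.hp1').le (sub_nonneg.2 (hM hτ2)))
          hρ hA1 hA2 hW2b F4' f5
        rw [V_succ_sub, V_succ_sub, ← hsum1, ← hsum2]
        exact main
      -- Step B: extend to arbitrary middle points by density of good points
      rw [concaveOn_iff_slope_anti_adjacent]
      refine ⟨convex_Icc _ _, fun x y z hx hz hxy hyz => ?_⟩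
      have hy : y ∈ Icc 0 S.c := ⟨hx.1.trans hxy.le, hyz.le.trans hz.2⟩
      rw [div_le_div_iff₀ (by linarith) (by linarith)]
      set F : ℝ → ℝ := fun b =>
        (S.V (m+1) b - S.V (m+1) x) * (z - b) - (S.V (m+1) z - S.V (m+1) b) * (b - x) with hF
      have hFcont : Continuous F :=
        ((hVc.sub continuous_const).mul (continuous_const.sub continuous_id)).sub
          ((continuous_const.sub hVc).mul (continuous_id.sub continuous_const))
      have hclosed : IsClosed {b : ℝ | 0 ≤ F b} := isClosed_le continuous_const hFcont
      have hgood_sub : {b : ℝ | b ∈ Icc x z ∧ S.good b} ⊆ {b : ℝ | 0 ≤ F b} := by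
        intro b hb
        have hbIcc : b ∈ Icc 0 S.c := ⟨hx.1.trans hb.1.1, hb.1.2.trans hz.2⟩
        have hk := key x b z hx hbIcc hz hb.1.1 hb.1.2 hb.2
        simp only [mem_setOf_eq, hF]
        linarith
      have hdense : Icc x z ⊆ closure {b : ℝ | b ∈ Icc x z ∧ S.good b} := by
        intro b hb
        rw [mem_closure_iff]
        intro o ho hbo
        obtain ⟨ε, hε, hball⟩ := Metric.isOpen_iff.1 ho b hbo
        set lo := max (b - ε) x with hlo
        set hi := min (b + ε) z with hhi
        have hlohi : lo < hi := by
          rw [hlo, hhi]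
          have hxz : x < z := hxy.trans hyz
          apply max_lt <;> [skip; skip] <;> apply lt_min <;>
            first
              | linarith [hb.1, hb.2]
        have hJo : Ioo lo hi ⊆ o := by
          intro t ht
          apply hball
          rw [Real.ball_eq_Ioo]
          exact ⟨lt_of_le_of_lt (le_max_left _ _) ht.1, lt_of_lt_of_le ht.2 (min_le_left _ _)⟩
        have hJxz : Ioo lo hi ⊆ Icc x z :=
          fun t ht => ⟨(le_max_right _ _).trans ht.1.le, ht.2.le.trans (min_le_right _ _)⟩
        have hJ0c : Ioo lo hi ⊆ Icc 0 S.c := fun t ht =>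
          ⟨hx.1.trans (hJxz ht).1, (hJxz ht).2.trans hz.2⟩
        have hpos : 0 < volume (Ioo lo hi) := by
          rw [Real.volume_Ioo]
          exact ENNReal.ofReal_pos.2 (by linarith)
        obtain ⟨t, htJ, htg⟩ := S.exists_good hpos hJ0c
        exact ⟨t, hJo htJ, hJxz htJ, htg⟩
      have hyF : 0 ≤ F y :=
        hclosed.closure_subset (closure_mono hgood_sub (hdense ⟨hxy.le, hyz.le⟩))
      simp only [mem_setOf_eq, hF] at hyF
      linarith
    exact ⟨hM', hL', hP', hC'⟩

lemma V_mono (m : ℕ) : Monotone (S.V m) := (S.V_main m).1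
lemma V_concave (m : ℕ) : ConcaveOn ℝ (Icc 0 S.c) (S.V m) := (S.V_main m).2.2.2

lemma sigc_measurable : Measurable S.sigc := S.sigc_mono.measurable
lemma tauc_measurable : Measurable S.tauc := S.tauc_mono.measurable

/-- one-step reward as a function of the post-arrival battery level -/
lemma rsig_mono : Monotone (fun b => S.r (S.sigc b)) := fun a b h =>
  S.hr_mono (mem_Ici.2 (S.sigc_mem a).1) (mem_Ici.2 (S.sigc_mem b).1) (S.sigc_mono h)

lemma rsig_nonneg (b : ℝ) : 0 ≤ S.r (S.sigc b) := S.r_nonneg (S.sigc_mem b).1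

lemma rsig_le (b : ℝ) : S.r (S.sigc b) ≤ S.r S.c :=
  S.hr_mono (mem_Ici.2 (S.sigc_mem b).1) (mem_Ici.2 S.hc.le) (S.sigc_mem b).2

noncomputable def nxt (x y : ℝ) : ℝ := min (x + y) S.c

lemma nxt_mono_left (y : ℝ) : Monotone (fun x => S.nxt x y) :=
  fun _ _ h => min_le_min (by linarith) le_rfl

lemma nxt_mono_right (x : ℝ) : Monotone (fun y => S.nxt x y) :=
  fun _ _ h => min_le_min (by linarith) le_rfl

lemma nxt_mem {x y : ℝ} (hx : x ∈ Icc (0:ℝ) S.c) (hy : y ∈ Icc (0:ℝ) S.c) :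
    S.nxt x y ∈ Icc (0:ℝ) S.c :=
  ⟨le_min (by linarith [hx.1, hy.1]) S.hc.le, min_le_right _ _⟩

lemma nxt_measurable : Measurable (fun q : ℝ × ℝ => S.nxt q.1 q.2) :=
  (measurable_fst.add measurable_snd).min measurable_const

/-- recursively defined total reward, using the clamped policy -/
noncomputable def RC : (n : ℕ) → ℝ → (Fin n → ℝ) → ℝ
  | 0, _, _ => 0
  | (n+1), x, xs => S.r (S.sigc (S.nxt x (xs 0))) + RC n (S.tauc (S.nxt x (xs 0))) (Fin.tail xs)

lemma RC_succ (n : ℕ) (x : ℝ) (xs : Fin (n+1) → ℝ) :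
    S.RC (n+1) x xs
      = S.r (S.sigc (S.nxt x (xs 0))) + S.RC n (S.tauc (S.nxt x (xs 0))) (Fin.tail xs) := by
  rw [RC]

lemma RC_nonneg : ∀ (n : ℕ) (x : ℝ) (xs : Fin n → ℝ), 0 ≤ S.RC n x xs := by
  intro n
  induction n with
  | zero => intro x xs; rw [RC]
  | succ n ih =>
    intro x xs
    rw [RC_succ]
    exact add_nonneg (S.rsig_nonneg _) (ih _ _)

lemma RC_le : ∀ (n : ℕ) (x : ℝ) (xs : Fin n → ℝ), S.RC n x xs ≤ n * S.r S.c := by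
  intro n
  induction n with
  | zero => intro x xs; rw [RC]; simp
  | succ n ih =>
    intro x xs
    rw [RC_succ]
    have h1 := S.rsig_le (S.nxt x (xs 0))
    have h2 := ih (S.tauc (S.nxt x (xs 0))) (Fin.tail xs)
    push_cast
    linarith

lemma RC_measurable : ∀ n : ℕ, Measurable (fun q : ℝ × (Fin n → ℝ) => S.RC n q.1 q.2) := by
  intro n
  induction n with
  | zero =>
    simp only [RC]
    exact measurable_const
  | succ n ih =>
    have h0 : Measurable (fun q : ℝ × (Fin (n+1) → ℝ) => S.nxt q.1 (q.2 0)) :=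
      S.nxt_measurable.comp (measurable_fst.prodMk ((measurable_pi_apply 0).comp measurable_snd))
    have h1 : Measurable (fun q : ℝ × (Fin (n+1) → ℝ) => S.r (S.sigc (S.nxt q.1 (q.2 0)))) :=
      S.rsig_mono.measurable.comp h0
    have h2 : Measurable (fun q : ℝ × (Fin (n+1) → ℝ) =>
        (S.tauc (S.nxt q.1 (q.2 0)), Fin.tail q.2)) := by
      refine Measurable.prodMk (S.tauc_measurable.comp h0) ?_
      exact measurable_pi_lambda _ (fun i => (measurable_pi_apply _).comp measurable_snd)
    have := ih.comp h2
    simp only [RC_succ]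
    exact h1.add this

/-- expected total reward under i.i.d. arrivals from `μ`, recursive definition -/
noncomputable def G (μ : Measure ℝ) : ℕ → ℝ → ℝ
  | 0 => fun _ => 0
  | (n+1) => fun x => ∫ y, (S.r (S.sigc (S.nxt x y)) + G μ n (S.tauc (S.nxt x y))) ∂μ

lemma integrable_of_mono_bdd {f : ℝ → ℝ} {μ : Measure ℝ} [IsFiniteMeasure μ]
    (hf : Monotone f) {C : ℝ} (h0 : ∀ y, 0 ≤ f y) (hC : ∀ y, f y ≤ C) : Integrable f μ := by
  refine (integrable_const C).mono' hf.measurable.aestronglyMeasurable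
    (Filter.Eventually.of_forall fun y => ?_)
  rw [Real.norm_eq_abs, abs_of_nonneg (h0 y)]
  exact hC y

lemma G_props (μ : Measure ℝ) [IsProbabilityMeasure μ] :
    ∀ n : ℕ, Monotone (S.G μ n) ∧ (∀ x, 0 ≤ S.G μ n x ∧ S.G μ n x ≤ n * S.r S.c) := by
  intro n
  induction n with
  | zero =>
    refine ⟨monotone_const, fun x => ?_⟩
    simp [G]
  | succ n ih =>
    obtain ⟨ihM, ihB⟩ := ih
    have hrc : 0 ≤ S.r S.c := S.r_nonneg S.hc.le
    -- the integrand in y for fixed x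
    have hintd_mono : ∀ x, Monotone (fun y => S.r (S.sigc (S.nxt x y)) + S.G μ n (S.tauc (S.nxt x y))) := by
      intro x a b hab
      have h := S.nxt_mono_right x hab
      exact add_le_add (S.rsig_mono h) (ihM (S.tauc_mono h))
    have hintd_nonneg : ∀ x y, 0 ≤ S.r (S.sigc (S.nxt x y)) + S.G μ n (S.tauc (S.nxt x y)) :=
      fun x y => add_nonneg (S.rsig_nonneg _) (ihB _).1
    have hintd_le : ∀ x y, S.r (S.sigc (S.nxt x y)) + S.G μ n (S.tauc (S.nxt x y))
        ≤ (n+1 : ℕ) * S.r S.c := by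
      intro x y
      have := S.rsig_le (S.nxt x y)
      have := (ihB (S.tauc (S.nxt x y))).2
      push_cast
      linarith
    have hintg : ∀ x, Integrable (fun y => S.r (S.sigc (S.nxt x y)) + S.G μ n (S.tauc (S.nxt x y))) μ :=
      fun x => integrable_of_mono_bdd (hintd_mono x) (hintd_nonneg x) (hintd_le x)
    refine ⟨?_, fun x => ⟨?_, ?_⟩⟩
    · intro a b hab
      simp only [G]
      refine integral_mono (hintg a) (hintg b) (fun y => ?_)
      have h := S.nxt_mono_left y hab
      exact add_le_add (S.rsig_mono h) (ihM (S.tauc_mono h))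
    · simp only [G]
      exact integral_nonneg (fun y => hintd_nonneg x y)
    · simp only [G]
      calc ∫ y, (S.r (S.sigc (S.nxt x y)) + S.G μ n (S.tauc (S.nxt x y))) ∂μ
          ≤ ∫ _, ((n+1 : ℕ) * S.r S.c) ∂μ :=
            integral_mono (hintg x) (integrable_const _) (fun y => hintd_le x y)
        _ = (n+1 : ℕ) * S.r S.c := by simp

lemma V_nonneg : ∀ (m : ℕ) (b : ℝ), 0 ≤ S.V m b := by
  intro m
  induction m with
  | zero => intro b; simp [V]
  | succ m ih =>
    intro b
    rw [V_succ]
    have h1 := S.rsig_nonneg b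
    have h2 := ih S.c
    have h3 := ih (S.tauc b)
    nlinarith [S.hp0, S.hp1']

lemma bern_isProb : IsProbabilityMeasure (bern S.c S.p) := by
  constructor
  simp only [bern, Measure.add_apply, Measure.smul_apply, smul_eq_mul,
    MeasureTheory.measure_univ, mul_one]
  rw [← ENNReal.ofReal_add (by linarith [S.hp1]) S.hp0.le]
  norm_num

lemma bern_Icc : bern S.c S.p (Icc (0:ℝ) S.c) = 1 := by
  simp only [bern, Measure.add_apply, Measure.smul_apply, smul_eq_mul]
  rw [Measure.dirac_apply' _ measurableSet_Icc, Measure.dirac_apply' _ measurableSet_Icc]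
  simp only [indicator_of_mem (left_mem_Icc.2 S.hc.le), indicator_of_mem (right_mem_Icc.2 S.hc.le),
    Pi.one_apply, mul_one]
  rw [← ENNReal.ofReal_add (by linarith [S.hp1]) S.hp0.le]
  norm_num

lemma integral_bern {f : ℝ → ℝ} (hf : Measurable f) :
    ∫ y, f y ∂(bern S.c S.p) = (1 - S.p) * f 0 + S.p * f S.c := by
  have h0 : Integrable f (Measure.dirac (0:ℝ)) :=
    (integrable_const (f 0)).congr (ae_eq_dirac f).symm
  have hc0 : Integrable f (Measure.dirac S.c) :=
    (integrable_const (f S.c)).congr (ae_eq_dirac f).symm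
  have h1 : Integrable f (ENNReal.ofReal (1 - S.p) • Measure.dirac (0:ℝ)) :=
    h0.smul_measure ENNReal.ofReal_ne_top
  have h2 : Integrable f (ENNReal.ofReal S.p • Measure.dirac S.c) :=
    hc0.smul_measure ENNReal.ofReal_ne_top
  simp only [bern]
  rw [integral_add_measure h1 h2, integral_smul_measure, integral_smul_measure,
    integral_dirac, integral_dirac, smul_eq_mul, smul_eq_mul,
    ENNReal.toReal_ofReal (by linarith [S.hp1] : (0:ℝ) ≤ 1 - S.p),
    ENNReal.toReal_ofReal S.hp0.le]

lemma chord {x y : ℝ} (hx : x ∈ Icc (0:ℝ) S.c) (hy : y ∈ Icc (0:ℝ) S.c) (m : ℕ) :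
    S.V m x + y / S.c * (S.V m S.c - S.V m x) ≤ S.V m (S.nxt x y) := by
  have hydiv0 : 0 ≤ y / S.c := div_nonneg hy.1 S.hc.le
  have hydiv1 : y / S.c ≤ 1 := div_le_one_of_le₀ hy.2 S.hc.le
  rcases le_or_gt S.c (x + y) with h | h
  · have h1 : S.nxt x y = S.c := min_eq_right h
    rw [h1]
    have hm : S.V m x ≤ S.V m S.c := S.V_mono m hx.2
    nlinarith
  · have h1 : S.nxt x y = x + y := min_eq_left h.le
    rw [h1]
    have hcc := concave_cross (S.V_concave m) (x := x) (y := x + y) (z := S.c) hx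
      (right_mem_Icc.2 S.hc.le) (by linarith [hy.1]) h.le
    have hmono : S.V m x ≤ S.V m (x + y) := S.V_mono m (by linarith [hy.1])
    have hkey : y * (S.V m S.c - S.V m x) ≤ (S.V m (x+y) - S.V m x) * S.c := by
      nlinarith [hcc, hmono, hx.1, hy.1]
    have h2 : y * (S.V m S.c - S.V m x) / S.c ≤ S.V m (x+y) - S.V m x :=
      (div_le_iff₀ S.hc).2 hkey
    have h3 : y / S.c * (S.V m S.c - S.V m x) = y * (S.V m S.c - S.V m x) / S.c := by ring
    linarith [h3 ▸ h2]

lemma G_bern_eq : ∀ n : ℕ, ∀ x ∈ Icc (0:ℝ) S.c,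
    S.G (bern S.c S.p) n x = (1 - S.p) * S.V n x + S.p * S.V n S.c := by
  haveI := S.bern_isProb
  intro n
  induction n with
  | zero => intro x _; simp [G, V]
  | succ n ih =>
    intro x hx
    obtain ⟨ihM, ihB⟩ := S.G_props (bern S.c S.p) n
    have hmono : Monotone (fun y => S.r (S.sigc (S.nxt x y)) + S.G (bern S.c S.p) n (S.tauc (S.nxt x y))) := by
      intro a b hab
      have h := S.nxt_mono_right x hab
      exact add_le_add (S.rsig_mono h) (ihM (S.tauc_mono h))
    have heval := S.integral_bern hmono.measurable
    have hx0 : S.nxt x 0 = x := by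
      rw [nxt, add_zero, min_eq_left hx.2]
    have hxc : S.nxt x S.c = S.c := by
      rw [nxt, min_eq_right (by linarith [hx.1])]
    rw [show S.G (bern S.c S.p) (n+1) x
        = ∫ y, (S.r (S.sigc (S.nxt x y)) + S.G (bern S.c S.p) n (S.tauc (S.nxt x y))) ∂(bern S.c S.p)
        from rfl, heval, hx0, hxc,
      ih _ (S.tauc_mem x), ih _ (S.tauc_mem S.c), V_succ, V_succ]
    have e1 : S.sigc x = S.sig x := S.sigc_eq hx
    have e2 : S.sigc S.c = S.sig S.c := S.sigc_eq (right_mem_Icc.2 S.hc.le)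
    ring

lemma G_le (Q : Measure ℝ) [hQP : IsProbabilityMeasure Q] (hQs : Q (Icc (0:ℝ) S.c) = 1)
    (hQm : ∫ y, y ∂Q = S.p * S.c) :
    ∀ n : ℕ, ∀ x ∈ Icc (0:ℝ) S.c, S.G (bern S.c S.p) n x ≤ S.G Q n x := by
  haveI := S.bern_isProb
  have hQae : ∀ᵐ y ∂Q, y ∈ Icc (0:ℝ) S.c := by
    rw [ae_iff]
    have h1 : {y : ℝ | ¬ y ∈ Icc (0:ℝ) S.c} = (Icc (0:ℝ) S.c)ᶜ := rfl
    rw [h1, measure_compl measurableSet_Icc (measure_ne_top Q _), hQs, measure_univ]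
    simp
  have hid_int : Integrable (fun y : ℝ => y) Q := by
    refine (integrable_const S.c).mono' measurable_id.aestronglyMeasurable ?_
    filter_upwards [hQae] with y hy
    rw [Real.norm_eq_abs, abs_of_nonneg hy.1]
    exact hy.2
  intro n
  induction n with
  | zero => intro x _; simp [G]
  | succ n ih =>
    intro x hx
    obtain ⟨ihMb, ihBb⟩ := S.G_props (bern S.c S.p) n
    obtain ⟨ihMq, ihBq⟩ := S.G_props Q n
    have hiden : ∀ b : ℝ, S.r (S.sigc b) + S.G (bern S.c S.p) n (S.tauc b) = S.V (n+1) b := by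
      intro b
      rw [S.G_bern_eq n _ (S.tauc_mem b), V_succ]
      ring
    -- integrability of the three integrands
    have hintb : Integrable (fun y => S.r (S.sigc (S.nxt x y)) + S.G (bern S.c S.p) n (S.tauc (S.nxt x y))) Q := by
      refine integrable_of_mono_bdd ?_ ?_ (C := (n+1:ℕ) * S.r S.c) ?_
      · intro a b hab
        have h := S.nxt_mono_right x hab
        exact add_le_add (S.rsig_mono h) (ihMb (S.tauc_mono h))
      · exact fun y => add_nonneg (S.rsig_nonneg _) (ihBb _).1
      · intro y
        have := S.rsig_le (S.nxt x y)
        have := (ihBb (S.tauc (S.nxt x y))).2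
        push_cast
        linarith
    have hintq : Integrable (fun y => S.r (S.sigc (S.nxt x y)) + S.G Q n (S.tauc (S.nxt x y))) Q := by
      refine integrable_of_mono_bdd ?_ ?_ (C := (n+1:ℕ) * S.r S.c) ?_
      · intro a b hab
        have h := S.nxt_mono_right x hab
        exact add_le_add (S.rsig_mono h) (ihMq (S.tauc_mono h))
      · exact fun y => add_nonneg (S.rsig_nonneg _) (ihBq _).1
      · intro y
        have := S.rsig_le (S.nxt x y)
        have := (ihBq (S.tauc (S.nxt x y))).2
        push_cast
        linarith
    have haff_int : Integrable (fun y : ℝ => S.V (n+1) x + y * ((S.V (n+1) S.c - S.V (n+1) x) / S.c)) Q :=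
      (integrable_const _).add (hid_int.mul_const _)
    calc S.G (bern S.c S.p) (n+1) x
        = (1 - S.p) * S.V (n+1) x + S.p * S.V (n+1) S.c := S.G_bern_eq (n+1) x hx
      _ = ∫ y, (S.V (n+1) x + y * ((S.V (n+1) S.c - S.V (n+1) x) / S.c)) ∂Q := by
          rw [integral_add (integrable_const _) (hid_int.mul_const _),
            integral_const, integral_mul_const, hQm]
          simp only [probReal_univ, ENNReal.toReal_one, one_smul]
          have hcne : S.c ≠ 0 := ne_of_gt S.hc
          field_simp
          ring
      _ ≤ ∫ y, S.V (n+1) (S.nxt x y) ∂Q := by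
          refine integral_mono_ae haff_int ?_ ?_
          · refine integrable_of_mono_bdd ?_ ?_ (C := S.V (n+1) S.c) ?_
            · exact fun a b hab => S.V_mono (n+1) (S.nxt_mono_right x hab)
            · exact fun y => S.V_nonneg (n+1) _
            · exact fun y => S.V_mono (n+1) (min_le_right _ _)
          · filter_upwards [hQae] with y hy
            have := S.chord hx hy (n+1)
            have h3 : y / S.c * (S.V (n+1) S.c - S.V (n+1) x)
                = y * ((S.V (n+1) S.c - S.V (n+1) x) / S.c) := by ring
            linarith [h3 ▸ this]
      _ = ∫ y, (S.r (S.sigc (S.nxt x y)) + S.G (bern S.c S.p) n (S.tauc (S.nxt x y))) ∂Q := by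
          refine integral_congr_ae (Filter.Eventually.of_forall fun y => ?_)
          exact (hiden _).symm
      _ ≤ ∫ y, (S.r (S.sigc (S.nxt x y)) + S.G Q n (S.tauc (S.nxt x y))) ∂Q := by
          refine integral_mono hintb hintq (fun y => ?_)
          exact add_le_add le_rfl (ih _ (S.tauc_mem _))
      _ = S.G Q (n+1) x := rfl

lemma RC_integral (μ : Measure ℝ) [IsProbabilityMeasure μ] :
    ∀ (n : ℕ) (x : ℝ),
      ∫ xs : Fin n → ℝ, S.RC n x xs ∂(Measure.pi fun _ : Fin n => μ) = S.G μ n x := by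
  intro n
  induction n with
  | zero => intro x; simp [RC, G]
  | succ n ih =>
    intro x
    have hmp := measurePreserving_piFinSuccAbove (fun _ : Fin (n+1) => μ) 0
    set T := MeasurableEquiv.piFinSuccAbove (fun _ : Fin (n+1) => ℝ) 0 with hT
    have hFmeas : Measurable (fun q : ℝ × (Fin n → ℝ) => S.RC (n+1) x (T.symm q)) :=
      (S.RC_measurable (n+1)).comp (measurable_const.prodMk T.symm.measurable)
    have hFint : Integrable (fun q : ℝ × (Fin n → ℝ) => S.RC (n+1) x (T.symm q))
        (μ.prod (Measure.pi fun _ : Fin n => μ)) := by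
      refine (integrable_const ((n+1 : ℕ) * S.r S.c)).mono' hFmeas.aestronglyMeasurable ?_
      refine Filter.Eventually.of_forall fun q => ?_
      rw [Real.norm_eq_abs, abs_of_nonneg (S.RC_nonneg _ _ _)]
      exact S.RC_le _ _ _
    have hchg : ∫ xs : Fin (n+1) → ℝ, S.RC (n+1) x xs ∂(Measure.pi fun _ => μ)
        = ∫ q, S.RC (n+1) x (T.symm q) ∂(μ.prod (Measure.pi fun _ : Fin n => μ)) := by
      rw [← hmp.integral_comp T.measurableEmbedding (fun q => S.RC (n+1) x (T.symm q))]
      refine integral_congr_ae (Filter.Eventually.of_forall fun xs => ?_)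
      exact (congrArg (S.RC (n+1) x) (T.symm_apply_apply xs)).symm
    rw [hchg, integral_prod _ hFint]
    have hsymm : ∀ (y : ℝ) (z : Fin n → ℝ), T.symm (y, z) = Fin.cons y z := by
      intro y z
      have h1 : T.symm (y, z) = Fin.insertNth 0 y z := rfl
      rw [h1, Fin.insertNth_zero']
    have hinner : ∀ y : ℝ,
        ∫ z : Fin n → ℝ, S.RC (n+1) x (T.symm (y, z)) ∂(Measure.pi fun _ : Fin n => μ)
        = S.r (S.sigc (S.nxt x y)) + S.G μ n (S.tauc (S.nxt x y)) := by
      intro y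
      have hp : ∀ z : Fin n → ℝ, S.RC (n+1) x (T.symm (y, z))
          = S.r (S.sigc (S.nxt x y)) + S.RC n (S.tauc (S.nxt x y)) z := by
        intro z
        rw [hsymm, RC_succ]
        simp only [Fin.cons_zero, Fin.tail_cons]
      rw [integral_congr_ae (Filter.Eventually.of_forall hp)]
      have hRCmeas : Measurable (fun z : Fin n → ℝ => S.RC n (S.tauc (S.nxt x y)) z) :=
        (S.RC_measurable n).comp (measurable_const.prodMk measurable_id)
      have hRCint : Integrable (fun z : Fin n → ℝ => S.RC n (S.tauc (S.nxt x y)) z)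
          (Measure.pi fun _ : Fin n => μ) := by
        refine (integrable_const ((n : ℕ) * S.r S.c)).mono' hRCmeas.aestronglyMeasurable ?_
        refine Filter.Eventually.of_forall fun z => ?_
        rw [Real.norm_eq_abs, abs_of_nonneg (S.RC_nonneg _ _ _)]
        exact S.RC_le _ _ _
      rw [integral_add (integrable_const _) hRCint, integral_const, ih]
      simp
    rw [integral_congr_ae (Filter.Eventually.of_forall hinner)]
    rfl

lemma battery_shift (x : ℝ) (xs : ℕ → ℝ) (t : ℕ) :
    battery S.c S.sig x xs (t+1)
      = battery S.c S.sig (min (x + xs 0) S.c - S.sig (min (x + xs 0) S.c))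
          (fun i => xs (i+1)) t := by
  induction t with
  | zero => simp [battery]
  | succ t iht =>
    rw [show battery S.c S.sig x xs (t+1+1)
        = min (battery S.c S.sig x xs (t+1) - S.sig (battery S.c S.sig x xs (t+1)) + xs (t+1+1))
            S.c from rfl, iht]
    rfl

lemma totalReward_eq : ∀ (n : ℕ) (x : ℝ), x ∈ Icc (0:ℝ) S.c → ∀ xs : ℕ → ℝ,
    (∀ t, xs t ∈ Icc (0:ℝ) S.c) →
    totalReward S.r S.c S.sig x xs n = S.RC n x (fun i : Fin n => xs i) := by
  intro n
  induction n with
  | zero => intro x hx xs hxs; simp [totalReward, RC]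
  | succ n ih =>
    intro x hx xs hxs
    have hb0 : battery S.c S.sig x xs 0 = S.nxt x (xs 0) := rfl
    have hb0m : S.nxt x (xs 0) ∈ Icc (0:ℝ) S.c := S.nxt_mem hx (hxs 0)
    have etau : S.tauc (S.nxt x (xs 0)) = S.nxt x (xs 0) - S.sig (S.nxt x (xs 0)) :=
      S.tauc_eq hb0m
    have hx' : S.nxt x (xs 0) - S.sig (S.nxt x (xs 0)) ∈ Icc (0:ℝ) S.c := by
      rw [← etau]; exact S.tauc_mem _
    have hshift : ∀ t, battery S.c S.sig x xs (t+1)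
        = battery S.c S.sig (S.nxt x (xs 0) - S.sig (S.nxt x (xs 0))) (fun i => xs (i+1)) t := by
      intro t
      have := S.battery_shift x xs t
      rw [this]
      rfl
    have hsum : ∑ i ∈ Finset.range n, S.r (S.sig (battery S.c S.sig x xs (i+1)))
        = totalReward S.r S.c S.sig (S.nxt x (xs 0) - S.sig (S.nxt x (xs 0)))
            (fun i => xs (i+1)) n := by
      rw [totalReward]
      exact Finset.sum_congr rfl fun i _ => by rw [hshift]
    rw [totalReward, Finset.sum_range_succ', hsum, ih _ hx' _ (fun t => hxs (t+1)), RC_succ]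
    have etail : Fin.tail (fun i : Fin (n+1) => xs ↑i) = fun i : Fin n => xs (↑i + 1) := by
      funext i
      simp [Fin.tail, Fin.val_succ]
    have esig : S.sigc (S.nxt x (xs 0)) = S.sig (S.nxt x (xs 0)) := S.sigc_eq hb0m
    simp only [Fin.val_zero]
    rw [etail, esig, etau, hb0]
    ring

lemma main_integral_eq (μ : Measure ℝ) [IsProbabilityMeasure μ]
    (hμs : μ (Icc (0:ℝ) S.c) = 1) (n : ℕ) {x : ℝ} (hx : x ∈ Icc (0:ℝ) S.c) :
    ∫ xs : Fin n → ℝ,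
        totalReward S.r S.c S.sig x (fun t => if h : t < n then xs ⟨t, h⟩ else 0) n
        ∂(Measure.pi fun _ : Fin n => μ) = S.G μ n x := by
  rw [← S.RC_integral μ n x]
  refine integral_congr_ae ?_
  have hset : (Measure.pi fun _ : Fin n => μ) (Set.pi univ fun _ : Fin n => Icc (0:ℝ) S.c) = 1 := by
    rw [Measure.pi_pi]
    simp [hμs]
  have hae : ∀ᵐ xs : Fin n → ℝ ∂(Measure.pi fun _ : Fin n => μ),
      ∀ i, xs i ∈ Icc (0:ℝ) S.c := by
    rw [ae_iff]
    have hcompl : {xs : Fin n → ℝ | ¬ ∀ i, xs i ∈ Icc (0:ℝ) S.c}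
        = (Set.pi univ fun _ : Fin n => Icc (0:ℝ) S.c)ᶜ := by
      ext xs
      simp only [mem_setOf_eq, mem_compl_iff, Set.mem_pi, mem_univ, true_implies]
    rw [hcompl, measure_compl (MeasurableSet.univ_pi fun _ => measurableSet_Icc)
      (measure_ne_top _ _), hset, measure_univ]
    simp
  filter_upwards [hae] with xs hxs
  have hxs' : ∀ t, (fun t => if h : t < n then xs ⟨t, h⟩ else 0) t ∈ Icc (0:ℝ) S.c := by
    intro t
    by_cases h : t < n
    · simpa only [dif_pos h] using hxs ⟨t, h⟩
    · simp only [dif_neg h]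
      exact ⟨le_rfl, S.hc.le⟩
  rw [S.totalReward_eq n x hx _ hxs']
  congr 1
  funext i
  simp [i.isLt]

end Setting
end BLF

/-- **Bernoulli is the least favorable distribution for normal non-greedy policies**
(Theorem 2). Let `r` be a reward function that is differentiable on `[0, ∞)` with
derivative `r'`, and let `σ` be a normal stationary policy on `[0, c]` such that
`r' (σ x) ≥ (1 - p) r' (σ (x - σ x))` for a.e. `x ∈ [0, c]`. Then for every probability
measure `Q` on `[0, c]` with mean `p c`, every initial battery level `x ∈ [0, c]`, and
every horizon `n ≥ 1`, the expected total reward under i.i.d. `B̃_p` arrivals is at most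
that under i.i.d. `Q` arrivals. -/
theorem bernoulli_least_favorable
    (r r' : ℝ → ℝ)
    (hr_zero : r 0 = 0)
    (hr_nonneg : ∀ x : ℝ, 0 ≤ x → 0 ≤ r x)
    (hr_mono : MonotoneOn r (Ici (0 : ℝ)))
    (hr_lip : ∃ K : NNReal, LipschitzOnWith K r (Ici (0 : ℝ)))
    (hr_concave : ConcaveOn ℝ (Ici (0 : ℝ)) r)
    (hr_deriv : ∀ x : ℝ, 0 ≤ x → HasDerivWithinAt r (r' x) (Ici (0 : ℝ)) x)
    (c : ℝ) (hc : 0 < c) (p : ℝ) (hp : p ∈ Ioo (0 : ℝ) 1)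
    (σ : ℝ → ℝ)
    (hσ_pol : ∀ x ∈ Icc (0 : ℝ) c, 0 ≤ σ x ∧ σ x ≤ x)
    (hσ_mono : MonotoneOn σ (Icc (0 : ℝ) c))
    (hσ_concave : ConcaveOn ℝ (Icc (0 : ℝ) c) σ)
    (hnongreedy : ∀ᵐ x ∂(volume.restrict (Icc (0 : ℝ) c)),
      (1 - p) * r' (σ (x - σ x)) ≤ r' (σ x))
    (Q : Measure ℝ) (hQ : IsProbabilityMeasure Q) (hQsupp : Q (Icc (0 : ℝ) c) = 1)
    (hQmean : ∫ x, x ∂Q = p * c)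
    (x : ℝ) (hx : x ∈ Icc (0 : ℝ) c) (n : ℕ) (hn : 1 ≤ n) :
    ∫ xs : Fin n → ℝ,
        totalReward r c σ x (fun t => if h : t < n then xs ⟨t, h⟩ else 0) n
        ∂(Measure.pi fun _ : Fin n => bern c p) ≤
      ∫ xs : Fin n → ℝ,
        totalReward r c σ x (fun t => if h : t < n then xs ⟨t, h⟩ else 0) n
        ∂(Measure.pi fun _ : Fin n => Q) := by
  haveI := hQ
  set S : BLF.Setting :=
    { r := r, r' := r', c := c, p := p, sig := σ,
      hr_zero := hr_zero, hr_mono := hr_mono, hr_lip := hr_lip,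
      hr_concave := hr_concave, hr_deriv := hr_deriv,
      hc := hc, hp0 := hp.1, hp1 := hp.2,
      hs_nonneg := fun x hx => (hσ_pol x hx).1,
      hs_le := fun x hx => (hσ_pol x hx).2,
      hs_mono := hσ_mono, hs_concave := hσ_concave,
      hng := hnongreedy } with hS
  haveI : IsProbabilityMeasure (bern c p) := S.bern_isProb
  have h1 : ∫ xs : Fin n → ℝ,
      totalReward r c σ x (fun t => if h : t < n then xs ⟨t, h⟩ else 0) n
      ∂(Measure.pi fun _ : Fin n => bern c p) = S.G (bern c p) n x :=
    S.main_integral_eq (bern c p) S.bern_Icc n hx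
  have h2 : ∫ xs : Fin n → ℝ,
      totalReward r c σ x (fun t => if h : t < n then xs ⟨t, h⟩ else 0) n
      ∂(Measure.pi fun _ : Fin n => Q) = S.G Q n x :=
    S.main_integral_eq Q hQsupp n hx
  rw [h1, h2]
  exact S.G_le Q hQsupp hQmean n x hx
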